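/- For positive integers m₁, n₁, the ratio m₁^(n₁-1) * n₁^(m₁-1) / C(m₁ n₁, m₁+n₁-1) tends to 0 as m₁, n₁ → ∞; hence when G acts trivially on X and Y (so extreme measures correspond to maximal good sets), |E(μ₁,μ₂)| / C(m₁₂, m₁+n₁-1) → 0 as m₁, n₁ → ∞. -/

import Mathlib

open Finset

/-- Probability weights on `X × Y` with marginals `μ₁`, `μ₂` (trivial group). -/
def Kset {X Y : Type} [Fintype X] [Fintype Y] (μ₁ : X → ℝ) (μ₂ : Y → ℝ) :
    Set (X × Y → ℝ) :=
  {w | (∀ p, 0 ≤ w p) ∧ (∀ x, ∑ y, w (x, y) = μ₁ x) ∧ (∀ y, ∑ x, w (x, y) = μ₂ y)}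

section Analytic
open Real

/-- `k! ≤ e * k * (k/e)^k` for `k ≥ 1`. -/
lemma fact_le_aux : ∀ k : ℕ, 1 ≤ k →
    (Nat.factorial k : ℝ) ≤ Real.exp 1 * k * (k / Real.exp 1) ^ k := by
  intro k
  induction k with
  | zero => intro h; omega
  | succ n ih =>
    intro _
    rcases Nat.lt_or_ge 1 (n+1) with h1 | h1
    case inr =>
      have hn : n = 0 := by omega
      subst hn
      norm_num [Nat.factorial]
    case inl =>
      have hn : 1 ≤ n := by omega
      have ihn := ih hn
      have hnR : (1:ℝ) ≤ n := by exact_mod_cast hn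
      have hnpos : (0:ℝ) < n := by linarith
      have h2 : Real.exp (1/((n:ℝ)+1)) ≤ ((n:ℝ)+1)/n := by
        have h3 := Real.add_one_le_exp (-(1/((n:ℝ)+1)))
        have h5 : (n:ℝ)/((n:ℝ)+1) ≤ Real.exp (-(1/((n:ℝ)+1))) := by
          have he : -(1/((n:ℝ)+1)) + 1 = (n:ℝ)/((n:ℝ)+1) := by field_simp; ring
          linarith [he.symm.le]
        rw [Real.exp_neg] at h5
        have h4 : (0:ℝ) < (n:ℝ)/((n:ℝ)+1) := by positivity
        have h6 := Real.exp_pos (1/((n:ℝ)+1))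
        rw [le_inv_comm₀ h4 h6, inv_div] at h5
        exact h5
      have hkey : Real.exp 1 ≤ (((n:ℝ)+1)/n) ^ (n+1) := by
        have e1 : Real.exp 1 = Real.exp (1/((n:ℝ)+1)) ^ (n+1) := by
          rw [← Real.exp_nat_mul]
          congr 1
          push_cast
          field_simp
        rw [e1]
        exact pow_le_pow_left₀ (le_of_lt (Real.exp_pos _)) h2 _
      -- step
      have hfact : ((Nat.factorial (n+1) : ℕ) : ℝ) = ((n:ℝ)+1) * (Nat.factorial n : ℝ) := by
        push_cast [Nat.factorial_succ]; ring
      rw [hfact]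
      have step1 : ((n:ℝ)+1) * (Nat.factorial n : ℝ) ≤
          ((n:ℝ)+1) * (Real.exp 1 * n * ((n:ℝ) / Real.exp 1) ^ n) := by
        apply mul_le_mul_of_nonneg_left ihn (by positivity)
      refine step1.trans ?_
      -- suffices : n * (n/e)^n ≤ ((n+1)/e)^(n+1)
      have hmain : (n:ℝ) * ((n:ℝ)/Real.exp 1)^n ≤ (((n:ℝ)+1)/Real.exp 1)^(n+1) := by
        have hepos := Real.exp_pos (1:ℝ)
        rw [div_pow, div_pow, le_div_iff₀ (by positivity)]
        have : (n:ℝ) * (n:ℝ)^n * Real.exp 1 ≤ ((n:ℝ)+1)^(n+1) := by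
          have h7 : Real.exp 1 * (n:ℝ)^(n+1) ≤ ((n:ℝ)+1)^(n+1) := by
            have h8 : (((n:ℝ)+1)/n)^(n+1) * (n:ℝ)^(n+1) = ((n:ℝ)+1)^(n+1) := by
              rw [← mul_pow]; congr 1; field_simp
            calc Real.exp 1 * (n:ℝ)^(n+1) ≤ (((n:ℝ)+1)/n)^(n+1) * (n:ℝ)^(n+1) :=
                  mul_le_mul_of_nonneg_right hkey (by positivity)
              _ = ((n:ℝ)+1)^(n+1) := h8
          calc (n:ℝ) * (n:ℝ)^n * Real.exp 1 = Real.exp 1 * (n:ℝ)^(n+1) := by ring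
            _ ≤ ((n:ℝ)+1)^(n+1) := h7
        have heq : (n:ℝ) * ((n:ℝ)^n / Real.exp 1 ^ n) * Real.exp 1 ^ (n+1)
            = (n:ℝ) * (n:ℝ)^n * Real.exp 1 := by
          field_simp
          ring
        rw [heq]
        exact this
      calc ((n:ℝ)+1) * (Real.exp 1 * n * ((n:ℝ)/Real.exp 1)^n)
          = (Real.exp 1 * ((n:ℝ)+1)) * ((n:ℝ) * ((n:ℝ)/Real.exp 1)^n) := by ring
        _ ≤ (Real.exp 1 * ((n:ℝ)+1)) * (((n:ℝ)+1)/Real.exp 1)^(n+1) :=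
            mul_le_mul_of_nonneg_left hmain (by positivity)
        _ = Real.exp 1 * ((n:ℕ)+1 : ℕ) * (((n:ℕ)+1 : ℕ) / Real.exp 1) ^ (n+1) := by
            push_cast; ring

/-- AM-GM: `((m+n)/2)^(m+n) ≤ m^m * n^n`. -/
lemma amgm_aux (m n : ℕ) (hm : 1 ≤ m) (hn : 1 ≤ n) :
    (((m:ℝ)+n)/2) ^ (m+n) ≤ (m:ℝ)^m * (n:ℝ)^n := by
  have hmR : (0:ℝ) < m := by exact_mod_cast hm
  have hnR : (0:ℝ) < n := by exact_mod_cast hn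
  set s : ℝ := (m:ℝ) + n with hs
  have hsR : (0:ℝ) < s := by positivity
  have key := Real.geom_mean_le_arith_mean2_weighted
    (w₁ := (m:ℝ)/s) (w₂ := (n:ℝ)/s) (p₁ := s/(2*m)) (p₂ := s/(2*n))
    (by positivity) (by positivity) (by positivity) (by positivity)
    (by field_simp; exact hs.symm)
  have hsum : (m:ℝ)/s * (s/(2*m)) + (n:ℝ)/s * (s/(2*n)) = 1 := by
    field_simp
    ring
  rw [hsum] at key
  -- raise to power s
  have key2 : (s/(2*m)) ^ m * (s/(2*n)) ^ n ≤ 1 := by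
    have h1 : ((s/(2*m)) ^ ((m:ℝ)/s) * (s/(2*n)) ^ ((n:ℝ)/s)) ^ (s:ℝ) ≤ (1:ℝ) ^ (s:ℝ) :=
      Real.rpow_le_rpow (by positivity) key (le_of_lt hsR)
    rw [Real.one_rpow] at h1
    have e1 : ((m:ℝ)/s) * s = (m:ℝ) := div_mul_cancel₀ _ hsR.ne'
    have e2 : ((n:ℝ)/s) * s = (n:ℝ) := div_mul_cancel₀ _ hsR.ne'
    rw [Real.mul_rpow (by positivity) (by positivity), ← Real.rpow_mul (by positivity),
      ← Real.rpow_mul (by positivity), e1, e2, Real.rpow_natCast, Real.rpow_natCast] at h1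
    exact h1
  have hq1 : (s/(2*(m:ℝ))) * m = s/2 := by field_simp
  have hq2 : (s/(2*(n:ℝ))) * n = s/2 := by field_simp
  calc (s/2)^(m+n) = ((s/(2*(m:ℝ)))^m * (m:ℝ)^m) * ((s/(2*(n:ℝ)))^n * (n:ℝ)^n) := by
        rw [← mul_pow, ← mul_pow, hq1, hq2, pow_add]
    _ = ((s/(2*(m:ℝ)))^m * (s/(2*(n:ℝ)))^n) * ((m:ℝ)^m * (n:ℝ)^n) := by ring
    _ ≤ 1 * ((m:ℝ)^m * (n:ℝ)^n) := mul_le_mul_of_nonneg_right key2 (by positivity)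
    _ = (m:ℝ)^m * (n:ℝ)^n := one_mul _

lemma exp_neg_le_one_sub {x : ℝ} (hx : 0 ≤ x) (hx2 : x ≤ 1/2) :
    Real.exp (-(2*x)) ≤ 1 - x := by
  have h1 : (1:ℝ) + 2*x ≤ Real.exp (2*x) := by
    have := Real.add_one_le_exp (2*x); linarith
  have h2 : (0:ℝ) < 1 + 2*x := by linarith
  have h3 : Real.exp (-(2*x)) = (Real.exp (2*x))⁻¹ := Real.exp_neg _
  rw [h3]
  have h4 : (Real.exp (2*x))⁻¹ ≤ (1+2*x)⁻¹ := by
    apply inv_anti₀ h2 h1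
  refine h4.trans ?_
  rw [inv_le_iff_one_le_mul₀ h2]
  nlinarith

lemma pow_sub_le_descFactorial (a : ℕ) : ∀ k : ℕ, (a - k)^k ≤ a.descFactorial k := by
  intro k
  induction k with
  | zero => simp
  | succ j ih =>
    rw [Nat.descFactorial_succ, pow_succ]
    have h1 : (a - (j+1))^j ≤ (a - j)^j :=
      Nat.pow_le_pow_left (Nat.sub_le_sub_left (Nat.le_succ j) a) j
    have h2 : a - (j+1) ≤ a - j := Nat.sub_le_sub_left (Nat.le_succ j) a
    calc (a-(j+1))^j * (a-(j+1)) ≤ a.descFactorial j * (a - j) :=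
          Nat.mul_le_mul (h1.trans ih) h2
      _ = (a - j) * a.descFactorial j := Nat.mul_comm _ _

lemma main_bound (m n : ℕ) (hm : 30 ≤ m) (hn : 30 ≤ n) :
    (((m+1)^n * (n+1)^m : ℕ) : ℝ) * (Nat.factorial (m+n-1) : ℝ) ≤
    (((m-1)*(n-1) : ℕ) : ℝ)^(m+n-1) *
      (Real.exp 1 ^ 2 * ((m:ℝ)+n)^2 * (2*Real.exp (-(5/6:ℝ)))^(m+n-1+1)) := by
  have hm1 : 1 ≤ m := by omega
  have hn1 : 1 ≤ n := by omega
  set k : ℕ := m + n - 1 with hkdef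
  have hk1 : m + n = k + 1 := by omega
  have hkge : 1 ≤ k := by omega
  set M : ℝ := (m:ℝ) with hMdef
  set N : ℝ := (n:ℝ) with hNdef
  set s : ℝ := M + N with hsdef
  set e : ℝ := Real.exp 1 with hedef
  have hM : (30:ℝ) ≤ M := by rw [hMdef]; exact_mod_cast hm
  have hN : (30:ℝ) ≤ N := by rw [hNdef]; exact_mod_cast hn
  have hMpos : (0:ℝ) < M := by linarith
  have hNpos : (0:ℝ) < N := by linarith
  have hspos : (0:ℝ) < s := by simp only [hsdef]; linarith
  have hKs : (k:ℝ) + 1 = s := by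
    have : ((m+n : ℕ):ℝ) = ((k+1 : ℕ):ℝ) := by rw [hk1]
    push_cast at this
    simp only [hsdef, hMdef, hNdef]
    linarith
  have hepos : (0:ℝ) < e := Real.exp_pos 1
  -- b1
  have b1 : (M+1)^n ≤ M^n * Real.exp (N/M) := by
    have h1 : M + 1 ≤ M * Real.exp (1/M) := by
      have := Real.add_one_le_exp (1/M)
      have h2 : M * (1/M + 1) ≤ M * Real.exp (1/M) :=
        mul_le_mul_of_nonneg_left this hMpos.le
      have h3 : M * (1/M + 1) = M + 1 := by field_simp; ring
      linarith
    calc (M+1)^n ≤ (M * Real.exp (1/M))^n := pow_le_pow_left₀ (by linarith) h1 n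
      _ = M^n * Real.exp (1/M)^n := mul_pow _ _ _
      _ = M^n * Real.exp (N/M) := by
          rw [← Real.exp_nat_mul]
          congr 1
          simp only [hNdef]
          ring
  have b2 : (N+1)^m ≤ N^m * Real.exp (M/N) := by
    have h1 : N + 1 ≤ N * Real.exp (1/N) := by
      have := Real.add_one_le_exp (1/N)
      have h2 : N * (1/N + 1) ≤ N * Real.exp (1/N) :=
        mul_le_mul_of_nonneg_left this hNpos.le
      have h3 : N * (1/N + 1) = N + 1 := by field_simp; ring
      linarith
    calc (N+1)^m ≤ (N * Real.exp (1/N))^m := pow_le_pow_left₀ (by linarith) h1 m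
      _ = N^m * Real.exp (1/N)^m := mul_pow _ _ _
      _ = N^m * Real.exp (M/N) := by
          rw [← Real.exp_nat_mul]
          congr 1
          simp only [hMdef]
          ring
  -- A3
  have hKles : (k:ℝ) ≤ s := by linarith
  have A3 : (Nat.factorial k : ℝ) ≤ e^2 * s * s^k * Real.exp (-s) := by
    have h0 := fact_le_aux k hkge
    have h1 : ((k:ℝ)/e)^k ≤ (s/e)^k :=
      pow_le_pow_left₀ (by positivity) (by gcongr) k
    have h2 : (s/e)^k = s^k * Real.exp (-(k:ℝ)) := by
      have : s/e = s * Real.exp (-1) := by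
        rw [Real.exp_neg, div_eq_mul_inv]
      rw [this, mul_pow, ← Real.exp_nat_mul]
      congr 2
      ring
    have h3 : Real.exp (-(k:ℝ)) = e * Real.exp (-s) := by
      rw [show -(k:ℝ) = 1 + -s by linarith, Real.exp_add]
    calc (Nat.factorial k : ℝ) ≤ e * k * ((k:ℝ)/e)^k := h0
      _ ≤ e * s * ((k:ℝ)/e)^k := by gcongr
      _ ≤ e * s * (s/e)^k := by
          apply mul_le_mul_of_nonneg_left h1 (by positivity)
      _ = e * s * (s^k * (e * Real.exp (-s))) := by rw [h2, h3]
      _ = e^2 * s * s^k * Real.exp (-s) := by ring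
  -- A2
  have A2 : M^n * N^m ≤ (M*N)^(k+1) * (2/s)^(k+1) := by
    have ham : (s/2)^(k+1) ≤ M^m * N^n := by
      have := amgm_aux m n hm1 hn1
      rw [hk1] at this
      exact this
    have h1 : M^n * N^m * (s/2)^(k+1) ≤ (M*N)^(k+1) := by
      calc M^n * N^m * (s/2)^(k+1) ≤ M^n * N^m * (M^m * N^n) :=
            mul_le_mul_of_nonneg_left ham (by positivity)
        _ = (M*N)^(m+n) := by rw [mul_pow, pow_add, pow_add]; ring
        _ = (M*N)^(k+1) := by rw [hk1]
    have h2 : (0:ℝ) < (s/2)^(k+1) := by positivity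
    rw [← le_div_iff₀ h2] at h1
    calc M^n * N^m ≤ (M*N)^(k+1) / (s/2)^(k+1) := h1
      _ = (M*N)^(k+1) * (2/s)^(k+1) := by
          rw [div_eq_mul_inv, ← inv_pow, inv_div]
  -- A4 base
  have A4 : M * N * (Real.exp (-(2/M)) * Real.exp (-(2/N))) ≤ (M-1)*(N-1) := by
    have hx1 : Real.exp (-(2/M)) ≤ 1 - 1/M := by
      have := exp_neg_le_one_sub (x := 1/M) (by positivity) (by
        rw [div_le_div_iff₀ hMpos (by norm_num)]; linarith)
      rw [show -(2*(1/M)) = -(2/M) by ring] at this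
      exact this
    have hx2 : Real.exp (-(2/N)) ≤ 1 - 1/N := by
      have := exp_neg_le_one_sub (x := 1/N) (by positivity) (by
        rw [div_le_div_iff₀ hNpos (by norm_num)]; linarith)
      rw [show -(2*(1/N)) = -(2/N) by ring] at this
      exact this
    have hm' : M * Real.exp (-(2/M)) ≤ M - 1 := by
      have := mul_le_mul_of_nonneg_left hx1 hMpos.le
      have h3 : M * (1 - 1/M) = M - 1 := by field_simp
      linarith
    have hn' : N * Real.exp (-(2/N)) ≤ N - 1 := by
      have := mul_le_mul_of_nonneg_left hx2 hNpos.le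
      have h3 : N * (1 - 1/N) = N - 1 := by field_simp
      linarith
    calc M * N * (Real.exp (-(2/M)) * Real.exp (-(2/N)))
        = (M * Real.exp (-(2/M))) * (N * Real.exp (-(2/N))) := by ring
      _ ≤ (M-1)*(N-1) := by
          apply mul_le_mul hm' hn' (by positivity) (by linarith)
  -- exp comparison
  have hMN : M * N ≤ s^2 := by simp only [hsdef]; nlinarith
  have hcomp : M*N * (Real.exp (N/M) * Real.exp (M/N) * Real.exp (-s)) ≤
      s^2 * ((Real.exp (-(2/M)) * Real.exp (-(2/N)))^k * Real.exp (-(5/6:ℝ))^(k+1)) := by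
    rw [← Real.exp_add, ← Real.exp_add, ← Real.exp_add, ← Real.exp_nat_mul,
      ← Real.exp_nat_mul, ← Real.exp_add]
    apply mul_le_mul hMN (Real.exp_le_exp.mpr ?_) (Real.exp_pos _).le (by positivity)
    push_cast
    have l1 : N/M ≤ N/30 := by gcongr
    have l2 : M/N ≤ M/30 := by gcongr
    have l3 : (k:ℝ)/M ≤ s/30 := by
      apply div_le_div₀ (by positivity) hKles (by norm_num) hM
    have l4 : (k:ℝ)/N ≤ s/30 := by
      apply div_le_div₀ (by positivity) hKles (by norm_num) hN
    have hs30 : N/30 + M/30 = s/30 := by simp only [hsdef]; ring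
    have expand : (k:ℝ) * (-(2/M) + -(2/N)) + ((k:ℝ)+1) * (-(5/6))
        = -(2*((k:ℝ)/M)) - 2*((k:ℝ)/N) - (5/6)*s := by
      rw [← hKs]; field_simp; ring
    rw [expand]
    have : N/30 + M/30 + 2*(s/30) + 2*(s/30) ≤ s/6 := by
      rw [hs30]; linarith
    linarith
  -- final assembly
  have hcast1 : (((m+1)^n * (n+1)^m : ℕ) : ℝ) = (M+1)^n * (N+1)^m := by push_cast; ring
  have hcast2 : (((m-1)*(n-1) : ℕ) : ℝ) = (M-1)*(N-1) := by
    push_cast [Nat.cast_sub hm1, Nat.cast_sub hn1]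
    ring
  rw [hcast1, hcast2, show m+n-1+1 = k+1 from rfl]
  calc (M+1)^n * (N+1)^m * (Nat.factorial k : ℝ)
      ≤ (M^n * Real.exp (N/M)) * (N^m * Real.exp (M/N)) * (e^2*s*s^k*Real.exp (-s)) := by
        apply mul_le_mul (mul_le_mul b1 b2 (by positivity) (by positivity)) A3
          (by positivity) (by positivity)
    _ = (M^n * N^m) * (Real.exp (N/M) * Real.exp (M/N) * (e^2*s*s^k*Real.exp (-s))) := by
        ring
    _ ≤ ((M*N)^(k+1) * (2/s)^(k+1)) *
          (Real.exp (N/M) * Real.exp (M/N) * (e^2*s*s^k*Real.exp (-s))) := by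
        apply mul_le_mul_of_nonneg_right A2 (by positivity)
    _ = ((M*N)^k * e^2 * 2^(k+1)) *
          (M*N * (Real.exp (N/M) * Real.exp (M/N) * Real.exp (-s))) := by
        rw [div_pow, pow_succ (M*N) k]
        field_simp
        ring
    _ ≤ ((M*N)^k * e^2 * 2^(k+1)) *
          (s^2 * ((Real.exp (-(2/M)) * Real.exp (-(2/N)))^k * Real.exp (-(5/6:ℝ))^(k+1))) := by
        apply mul_le_mul_of_nonneg_left hcomp (by positivity)
    _ = ((M*N) * (Real.exp (-(2/M)) * Real.exp (-(2/N))))^k *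
          (e^2 * s^2 * (2*Real.exp (-(5/6:ℝ)))^(k+1)) := by
        rw [mul_pow (M*N), mul_pow 2]
        ring
    _ ≤ ((M-1)*(N-1))^k * (e^2 * s^2 * (2*Real.exp (-(5/6:ℝ)))^(k+1)) := by
        apply mul_le_mul_of_nonneg_right (pow_le_pow_left₀ (by positivity) A4 k)
          (by positivity)

lemma aux_sub (m n : ℕ) (hm : 1 ≤ m) (hn : 1 ≤ n) :
    m*n - (m+n-1) = (m-1)*(n-1) ∧ m+n-1 ≤ m*n := by
  obtain ⟨a, rfl⟩ : ∃ a, m = a+1 := ⟨m-1, by omega⟩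
  obtain ⟨b, rfl⟩ : ∃ b, n = b+1 := ⟨n-1, by omega⟩
  have h : (a+1)*(b+1) = a*b + a + b + 1 := by ring
  constructor
  · simp only [h, Nat.add_sub_cancel]
    omega
  · omega

lemma ratio_bound (m n : ℕ) (hm : 30 ≤ m) (hn : 30 ≤ n) :
    (((m+1)^n * (n+1)^m : ℕ) : ℝ) / ((m*n).choose (m+n-1) : ℝ)
      ≤ Real.exp 1 ^ 2 * ((m:ℝ)+n)^2 * (2*Real.exp (-(5/6:ℝ)))^(m+n) := by
  obtain ⟨hsub, hkle⟩ := aux_sub m n (by omega) (by omega)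
  set k : ℕ := m + n - 1 with hkdef
  have hchoosepos : 0 < (m*n).choose k := Nat.choose_pos hkle
  have hCpos : (0:ℝ) < ((m*n).choose k : ℝ) := by exact_mod_cast hchoosepos
  have h1 : (((m-1)*(n-1) : ℕ))^k ≤ Nat.factorial k * (m*n).choose k := by
    rw [← hsub]
    calc (m*n - k)^k ≤ (m*n).descFactorial k := pow_sub_le_descFactorial _ _
      _ = Nat.factorial k * (m*n).choose k := Nat.descFactorial_eq_factorial_mul_choose _ _
  have h1R : ((((m-1)*(n-1) : ℕ)):ℝ)^k ≤ (Nat.factorial k : ℝ) * ((m*n).choose k : ℝ) := by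
    exact_mod_cast h1
  have hmain := main_bound m n hm hn
  have hfacpos : (0:ℝ) < (Nat.factorial k : ℝ) := by
    exact_mod_cast Nat.factorial_pos k
  set B : ℝ := Real.exp 1 ^ 2 * ((m:ℝ)+n)^2 * (2*Real.exp (-(5/6:ℝ)))^(k+1) with hBdef
  have hBnn : 0 ≤ B := by positivity
  have hA : (((m+1)^n * (n+1)^m : ℕ) : ℝ) * (Nat.factorial k : ℝ)
      ≤ (((m*n).choose k : ℝ) * B) * (Nat.factorial k : ℝ) := by
    calc (((m+1)^n * (n+1)^m : ℕ) : ℝ) * (Nat.factorial k : ℝ)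
        ≤ (((m-1)*(n-1) : ℕ) : ℝ)^k * B := hmain
      _ ≤ ((Nat.factorial k : ℝ) * ((m*n).choose k : ℝ)) * B :=
          mul_le_mul_of_nonneg_right h1R hBnn
      _ = (((m*n).choose k : ℝ) * B) * (Nat.factorial k : ℝ) := by ring
  have hA2 := le_of_mul_le_mul_right hA hfacpos
  rw [div_le_iff₀ hCpos]
  have hexp : k + 1 = m + n := by omega
  rw [← hexp]
  calc (((m+1)^n * (n+1)^m : ℕ) : ℝ) ≤ ((m*n).choose k : ℝ) * B := hA2
    _ = Real.exp 1 ^ 2 * ((m:ℝ)+n)^2 * (2*Real.exp (-(5/6:ℝ)))^(k+1) * ((m*n).choose k : ℝ) := by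
        rw [hBdef]; ring

open Filter Topology in
lemma ratio_lt (ε : ℝ) (hε : 0 < ε) : ∃ N : ℕ, 30 ≤ N ∧ ∀ m n : ℕ, N ≤ m → N ≤ n →
    (((m+1)^n * (n+1)^m : ℕ) : ℝ) / ((m*n).choose (m+n-1) : ℝ) < ε := by
  set ρ : ℝ := 2*Real.exp (-(5/6:ℝ)) with hρdef
  have hρ0 : (0:ℝ) ≤ ρ := by positivity
  have hρ1 : ρ < 1 := by
    have h2 : Real.log 2 < 5/6 := lt_trans Real.log_two_lt_d9 (by norm_num)
    have h3 : (2:ℝ) < Real.exp (5/6) := by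
      calc (2:ℝ) = Real.exp (Real.log 2) := (Real.exp_log (by norm_num)).symm
        _ < Real.exp (5/6) := Real.exp_lt_exp.mpr h2
    have hpos := Real.exp_pos (-(5/6:ℝ))
    have h4 : Real.exp (5/6) * Real.exp (-(5/6:ℝ)) = 1 := by
      rw [← Real.exp_add]; norm_num
    calc ρ = 2 * Real.exp (-(5/6:ℝ)) := hρdef
      _ < Real.exp (5/6) * Real.exp (-(5/6:ℝ)) := mul_lt_mul_of_pos_right h3 hpos
      _ = 1 := h4
  have htend : Tendsto (fun s : ℕ => Real.exp 1 ^ 2 * ((s:ℝ)^2 * ρ^s)) atTop (𝓝 0) := by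
    have h := tendsto_pow_const_mul_const_pow_of_lt_one 2 hρ0 hρ1
    have h2 := h.const_mul (Real.exp 1 ^ 2)
    rw [mul_zero] at h2
    exact h2
  have hev : ∀ᶠ s : ℕ in atTop, Real.exp 1 ^ 2 * ((s:ℝ)^2 * ρ^s) < ε :=
    htend.eventually (gt_mem_nhds hε)
  obtain ⟨S₀, hS₀⟩ := eventually_atTop.mp hev
  refine ⟨max 30 S₀, le_max_left _ _, fun m n hm hn => ?_⟩
  have hm30 : 30 ≤ m := le_trans (le_max_left _ _) hm
  have hn30 : 30 ≤ n := le_trans (le_max_left _ _) hn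
  have hS : S₀ ≤ m + n := by
    have := le_trans (le_max_right 30 S₀) hm
    omega
  have hkey := hS₀ (m+n) hS
  apply lt_of_le_of_lt (ratio_bound m n hm30 hn30)
  calc Real.exp 1 ^ 2 * ((m:ℝ)+n)^2 * ρ^(m+n)
      = Real.exp 1 ^ 2 * (((m+n:ℕ):ℝ)^2 * ρ^(m+n)) := by push_cast; ring
    _ < ε := hkey

end Analytic


section Count

variable {X Y : Type} [Fintype X] [Fintype Y] [DecidableEq X] [DecidableEq Y]

/-- `S` is linearly independent as a set of edges: any "flow" with zero marginals
supported on `S` vanishes. -/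
def Indep (S : Finset (X × Y)) : Prop :=
  ∀ d : X × Y → ℝ, (∀ x, ∑ y, d (x,y) = 0) → (∀ y, ∑ x, d (x,y) = 0) →
    (∀ p, p ∉ S → d p = 0) → d = 0

def RowLeaf (S : Finset (X × Y)) (p : X × Y) : Prop := ∀ q ∈ S, q.1 = p.1 → q = p

def ColLeaf (S : Finset (X × Y)) (p : X × Y) : Prop := ∀ q ∈ S, q.2 = p.2 → q = p

omit [DecidableEq X] [DecidableEq Y] in
lemma indep_mono {S T : Finset (X × Y)} (hST : S ⊆ T) (hT : Indep T) : Indep S :=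
  fun d h1 h2 h3 => hT d h1 h2 (fun p hp => h3 p (fun hq => hp (hST hq)))

lemma exists_leaf {S : Finset (X × Y)} (hS : Indep S) (hne : S.Nonempty) :
    ∃ p ∈ S, RowLeaf S p ∨ ColLeaf S p := by
  by_contra hcon
  push_neg at hcon
  set R : Finset X := S.image Prod.fst with hRdef
  set C : Finset Y := S.image Prod.snd with hCdef
  have hR2 : ∀ x ∈ R, 2 ≤ (S.filter (fun q => q.1 = x)).card := by
    intro x hx
    obtain ⟨p, hpS, hpx⟩ := Finset.mem_image.mp hx
    obtain ⟨hnr, _⟩ := hcon p hpS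
    rw [RowLeaf] at hnr
    push_neg at hnr
    obtain ⟨q, hqS, hq1, hqne⟩ := hnr
    apply Finset.one_lt_card.mpr
    exact ⟨p, Finset.mem_filter.mpr ⟨hpS, hpx⟩, q,
      Finset.mem_filter.mpr ⟨hqS, by rw [hq1, hpx]⟩, fun h => hqne h.symm⟩
  have hC2 : ∀ y ∈ C, 2 ≤ (S.filter (fun q => q.2 = y)).card := by
    intro y hy
    obtain ⟨p, hpS, hpy⟩ := Finset.mem_image.mp hy
    obtain ⟨_, hnc⟩ := hcon p hpS
    rw [ColLeaf] at hnc
    push_neg at hnc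
    obtain ⟨q, hqS, hq2, hqne⟩ := hnc
    apply Finset.one_lt_card.mpr
    exact ⟨p, Finset.mem_filter.mpr ⟨hpS, hpy⟩, q,
      Finset.mem_filter.mpr ⟨hqS, by rw [hq2, hpy]⟩, fun h => hqne h.symm⟩
  have hcardR : 2 * R.card ≤ S.card := by
    have hfib : S.card = ∑ x ∈ R, (S.filter (fun q => q.1 = x)).card :=
      Finset.card_eq_sum_card_fiberwise (fun p hp => Finset.mem_image_of_mem _ hp)
    calc 2 * R.card = ∑ _x ∈ R, 2 := by rw [Finset.sum_const, smul_eq_mul, mul_comm]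
      _ ≤ ∑ x ∈ R, (S.filter (fun q => q.1 = x)).card := Finset.sum_le_sum hR2
      _ = S.card := hfib.symm
  have hcardC : 2 * C.card ≤ S.card := by
    have hfib : S.card = ∑ y ∈ C, (S.filter (fun q => q.2 = y)).card :=
      Finset.card_eq_sum_card_fiberwise (fun p hp => Finset.mem_image_of_mem _ hp)
    calc 2 * C.card = ∑ _y ∈ C, 2 := by rw [Finset.sum_const, smul_eq_mul, mul_comm]
      _ ≤ ∑ y ∈ C, (S.filter (fun q => q.2 = y)).card := Finset.sum_le_sum hC2
      _ = S.card := hfib.symm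
  obtain ⟨p₀, hp₀⟩ := hne
  have hx₀R : p₀.1 ∈ R := Finset.mem_image_of_mem _ hp₀
  set R' : Finset X := R.erase p₀.1 with hR'def
  set v : {q // q ∈ S} → ((↥R' → ℝ) × (↥C → ℝ)) := fun q =>
    (fun x => if q.1.1 = x.1 then 1 else 0, fun y => if q.1.2 = y.1 then 1 else 0) with hvdef
  have hli : LinearIndependent ℝ v := by
    rw [Fintype.linearIndependent_iff]
    intro c hc
    set d : X × Y → ℝ := fun q => if h : q ∈ S then c ⟨q, h⟩ else 0 with hddef
    have hd_eq : ∀ (q : {q // q ∈ S}), d q.1 = c q := fun q => by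
      simp only [hddef]; rw [dif_pos q.2]
    have hsum1 : ∀ x : ↥R', ∑ q : {q // q ∈ S}, (if q.1.1 = x.1 then c q else 0) = 0 := by
      intro x
      have h := congrFun (congrArg Prod.fst hc) x
      rw [Prod.fst_sum, Finset.sum_apply] at h
      simp only [Prod.fst_zero, Pi.zero_apply] at h
      have helt : ∀ q : {q // q ∈ S}, (if q.1.1 = x.1 then c q else 0) = (c q • v q).1 x := by
        intro q
        have hv1 : (c q • v q).1 x = c q * (if q.1.1 = x.1 then 1 else 0) := by
          simp [hvdef]
        rw [hv1]
        by_cases hq : q.1.1 = x.1 <;> simp [hq]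
      exact (Finset.sum_congr rfl (fun q _ => helt q)).trans h
    have hsum2 : ∀ y : ↥C, ∑ q : {q // q ∈ S}, (if q.1.2 = y.1 then c q else 0) = 0 := by
      intro y
      have h := congrFun (congrArg Prod.snd hc) y
      rw [Prod.snd_sum, Finset.sum_apply] at h
      simp only [Prod.snd_zero, Pi.zero_apply] at h
      have helt : ∀ q : {q // q ∈ S}, (if q.1.2 = y.1 then c q else 0) = (c q • v q).2 y := by
        intro q
        have hv1 : (c q • v q).2 y = c q * (if q.1.2 = y.1 then 1 else 0) := by
          simp [hvdef]
        rw [hv1]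
        by_cases hq : q.1.2 = y.1 <;> simp [hq]
      exact (Finset.sum_congr rfl (fun q _ => helt q)).trans h
    -- row sums of d
    have hrow_eq : ∀ x : X, ∑ y, d (x,y) = ∑ q : {q // q ∈ S}, (if q.1.1 = x then c q else 0) := by
      intro x
      have e1 : ∑ p : X × Y, (if p.1 = x then d p else 0) = ∑ y, d (x,y) := by
        rw [Fintype.sum_prod_type]
        have e2 : ∀ x' : X, ∑ y, (if (x',y).1 = x then d (x',y) else 0)
            = if x' = x then ∑ y, d (x',y) else 0 := by
          intro x'; by_cases h : x' = x <;> simp [h]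
        rw [Finset.sum_congr rfl (fun x' _ => e2 x')]
        simp [Finset.sum_ite_eq']
      have e3 : ∑ p ∈ S, (if p.1 = x then d p else 0) = ∑ p : X × Y, (if p.1 = x then d p else 0) :=
        Finset.sum_subset (Finset.subset_univ S) (fun p _ hp => by
          have hz : d p = 0 := by simp only [hddef]; rw [dif_neg hp]
          rw [hz]; split <;> rfl)
      have e4 : ∑ q : {q // q ∈ S}, (if q.1.1 = x then c q else 0)
          = ∑ p ∈ S, (if p.1 = x then d p else 0) := by
        rw [← Finset.sum_coe_sort S (fun p => if p.1 = x then d p else 0)]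
        apply Finset.sum_congr rfl
        intro q _
        rw [hd_eq]
      rw [e4, e3, e1]
    have hcol_eq : ∀ y : Y, ∑ x, d (x,y) = ∑ q : {q // q ∈ S}, (if q.1.2 = y then c q else 0) := by
      intro y
      have e1 : ∑ p : X × Y, (if p.2 = y then d p else 0) = ∑ x, d (x,y) := by
        rw [Fintype.sum_prod_type_right]
        have e2 : ∀ y' : Y, ∑ x, (if (x,y').2 = y then d (x,y') else 0)
            = if y' = y then ∑ x, d (x,y') else 0 := by
          intro y'; by_cases h : y' = y <;> simp [h]
        rw [Finset.sum_congr rfl (fun y' _ => e2 y')]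
        simp [Finset.sum_ite_eq']
      have e3 : ∑ p ∈ S, (if p.2 = y then d p else 0) = ∑ p : X × Y, (if p.2 = y then d p else 0) :=
        Finset.sum_subset (Finset.subset_univ S) (fun p _ hp => by
          have hz : d p = 0 := by simp only [hddef]; rw [dif_neg hp]
          rw [hz]; split <;> rfl)
      have e4 : ∑ q : {q // q ∈ S}, (if q.1.2 = y then c q else 0)
          = ∑ p ∈ S, (if p.2 = y then d p else 0) := by
        rw [← Finset.sum_coe_sort S (fun p => if p.2 = y then d p else 0)]
        apply Finset.sum_congr rfl
        intro q _
        rw [hd_eq]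
      rw [e4, e3, e1]
    -- column sums vanish
    have hcol0 : ∀ y : Y, ∑ x, d (x,y) = 0 := by
      intro y
      by_cases hy : y ∈ C
      · rw [hcol_eq y]; exact hsum2 ⟨y, hy⟩
      · rw [hcol_eq y]
        apply Finset.sum_eq_zero
        intro q _
        have : q.1.2 ∈ C := Finset.mem_image_of_mem _ q.2
        rw [if_neg (fun h => hy (by rw [← h]; exact this))]
    -- row sums vanish off p₀.1
    have hrow0' : ∀ x : X, x ≠ p₀.1 → ∑ y, d (x,y) = 0 := by
      intro x hxne
      by_cases hx : x ∈ R
      · rw [hrow_eq x]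
        exact hsum1 ⟨x, Finset.mem_erase.mpr ⟨hxne, hx⟩⟩
      · rw [hrow_eq x]
        apply Finset.sum_eq_zero
        intro q _
        have : q.1.1 ∈ R := Finset.mem_image_of_mem _ q.2
        rw [if_neg (fun h => hx (by rw [← h]; exact this))]
    have hrow0 : ∀ x : X, ∑ y, d (x,y) = 0 := by
      have htot : ∑ x : X, ∑ y : Y, d (x,y) = 0 := by
        rw [Finset.sum_comm]
        exact Finset.sum_eq_zero (fun y _ => hcol0 y)
      have hsingle : ∑ x : X, ∑ y : Y, d (x,y) = ∑ y, d (p₀.1, y) := by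
        apply Finset.sum_eq_single p₀.1
        · intro x _ hxne; exact hrow0' x hxne
        · intro h; exact absurd (Finset.mem_univ _) h
      intro x
      by_cases hx : x = p₀.1
      · rw [hx, ← hsingle, htot]
      · exact hrow0' x hx
    have hzero := hS d hrow0 hcol0 (fun p hp => by simp only [hddef]; rw [dif_neg hp])
    intro q
    rw [← hd_eq q, hzero]
    rfl
  have hcard := hli.fintype_card_le_finrank
  rw [Fintype.card_coe] at hcard
  have hfr : Module.finrank ℝ ((↥R' → ℝ) × (↥C → ℝ)) = R'.card + C.card := by
    rw [Module.finrank_prod, Module.finrank_pi, Module.finrank_pi, Fintype.card_coe,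
      Fintype.card_coe]
  rw [hfr] at hcard
  have hR'card : R'.card = R.card - 1 := Finset.card_erase_of_mem hx₀R
  have hRpos : 1 ≤ R.card := Finset.card_pos.mpr ⟨p₀.1, hx₀R⟩
  omega

end Count

section Count2

variable {X Y : Type} [Fintype X] [Fintype Y] [DecidableEq X] [DecidableEq Y]

open Classical in
/-- Encode an independent edge set as a pair of partial parent functions. -/
noncomputable def encode : Finset (X × Y) → ((Y → Option X) × (X → Option Y)) := fun S =>
  if h : ∃ p ∈ S, RowLeaf S p ∨ ColLeaf S p then
    let p := h.choose
    let prev := encode (S.erase p)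
    if RowLeaf S p then (prev.1, Function.update prev.2 p.1 (some p.2))
    else (Function.update prev.1 p.2 (some p.1), prev.2)
  else (fun _ => none, fun _ => none)
termination_by S => S.card
decreasing_by
  exact Finset.card_erase_lt_of_mem h.choose_spec.1

/-- Decode: recover the edge set from the parent functions. -/
def decode (fg : (Y → Option X) × (X → Option Y)) : Finset (X × Y) :=
  Finset.univ.filter (fun p => fg.1 p.2 = some p.1 ∨ fg.2 p.1 = some p.2)

lemma decode_encode : ∀ S : Finset (X × Y), Indep S → decode (encode S) = S := by
  intro S
  induction S using Finset.strongInduction with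
  | _ S ih =>
    intro hS
    rw [encode]
    by_cases h : ∃ p ∈ S, RowLeaf S p ∨ ColLeaf S p
    · rw [dif_pos h]
      obtain ⟨hpS, hleaf⟩ := h.choose_spec
      set p := h.choose with hpdef
      have hIndep' : Indep (S.erase p) := indep_mono (Finset.erase_subset _ _) hS
      have IH : decode (encode (S.erase p)) = S.erase p :=
        ih (S.erase p) (Finset.erase_ssubset hpS) hIndep'
      set fg := encode (S.erase p) with hfgdef
      by_cases hr : RowLeaf S p
      · rw [if_pos hr]
        -- g-part at p.1 is none
        have hg : fg.2 p.1 = none := by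
          cases hcase : fg.2 p.1 with
          | none => rfl
          | some y =>
            have hmem : (p.1, y) ∈ decode fg := by
              simp [decode, hcase]
            rw [IH] at hmem
            have h1 := Finset.mem_of_mem_erase hmem
            have h2 := hr _ h1 rfl
            rw [h2] at hmem
            exact absurd hmem (Finset.notMem_erase _ _)
        ext q
        simp only [decode, Finset.mem_filter, Finset.mem_univ, true_and]
        constructor
        · rintro (hf | hg2)
          · have : q ∈ decode fg := by simp [decode, hfgdef, hf]
            rw [IH] at this
            exact Finset.mem_of_mem_erase this
          · by_cases hq1 : q.1 = p.1
            · rw [hq1, Function.update_self] at hg2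
              have : q.2 = p.2 := by injection hg2.symm
              have hqp : q = p := Prod.ext hq1 this
              rw [hqp]; exact hpS
            · rw [Function.update_of_ne hq1] at hg2
              have : q ∈ decode fg := by simp [decode, hfgdef, hg2]
              rw [IH] at this
              exact Finset.mem_of_mem_erase this
        · intro hqS
          by_cases hq : q = p
          · right
            rw [hq, Function.update_self]
          · have hq' : q ∈ S.erase p := Finset.mem_erase.mpr ⟨hq, hqS⟩
            rw [← IH] at hq'
            simp only [decode, Finset.mem_filter, Finset.mem_univ, true_and] at hq'
            rcases hq' with hf | hg2
            · exact Or.inl hf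
            · have hq1 : q.1 ≠ p.1 := by
                intro hq1
                exact hq (hr _ hqS hq1)
              right
              rw [Function.update_of_ne hq1]
              exact hg2
      · rw [if_neg hr]
        have hc : ColLeaf S p := hleaf.resolve_left hr
        have hg : fg.1 p.2 = none := by
          cases hcase : fg.1 p.2 with
          | none => rfl
          | some x =>
            have hmem : (x, p.2) ∈ decode fg := by
              simp [decode, hcase]
            rw [IH] at hmem
            have h1 := Finset.mem_of_mem_erase hmem
            have h2 := hc _ h1 rfl
            rw [h2] at hmem
            exact absurd hmem (Finset.notMem_erase _ _)
        ext q
        simp only [decode, Finset.mem_filter, Finset.mem_univ, true_and]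
        constructor
        · rintro (hf2 | hgg)
          · by_cases hq2 : q.2 = p.2
            · rw [hq2, Function.update_self] at hf2
              have : q.1 = p.1 := by injection hf2.symm
              have hqp : q = p := Prod.ext this hq2
              rw [hqp]; exact hpS
            · rw [Function.update_of_ne hq2] at hf2
              have : q ∈ decode fg := by simp [decode, hfgdef, hf2]
              rw [IH] at this
              exact Finset.mem_of_mem_erase this
          · have : q ∈ decode fg := by simp [decode, hfgdef, hgg]
            rw [IH] at this
            exact Finset.mem_of_mem_erase this
        · intro hqS
          by_cases hq : q = p
          · left
            rw [hq, Function.update_self]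
          · have hq' : q ∈ S.erase p := Finset.mem_erase.mpr ⟨hq, hqS⟩
            rw [← IH] at hq'
            simp only [decode, Finset.mem_filter, Finset.mem_univ, true_and] at hq'
            rcases hq' with hf | hg2
            · have hq2 : q.2 ≠ p.2 := by
                intro hq2
                exact hq (hc _ hqS hq2)
              left
              rw [Function.update_of_ne hq2]
              exact hf
            · exact Or.inr hg2
    · rw [dif_neg h]
      have hSempty : S = ∅ := by
        by_contra hne
        exact h (exists_leaf hS (Finset.nonempty_iff_ne_empty.mpr hne))
      rw [hSempty]
      ext q
      simp [decode]

end Count2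

theorem ncard_extreme_le {X Y : Type} [Fintype X] [Fintype Y] (μ₁ : X → ℝ) (μ₂ : Y → ℝ) :
    (Set.extremePoints ℝ (Kset μ₁ μ₂)).ncard ≤
      (Fintype.card X + 1)^(Fintype.card Y) * (Fintype.card Y + 1)^(Fintype.card X) := by
  classical
  set E := Set.extremePoints ℝ (Kset μ₁ μ₂) with hEdef
  set supp : (X × Y → ℝ) → Finset (X × Y) :=
    fun w => Finset.univ.filter (fun p => w p ≠ 0) with hsuppdef
  have hsupp_mem : ∀ (w : X × Y → ℝ) (p : X × Y), p ∉ supp w → w p = 0 := by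
    intro w p hp
    by_contra hwp
    exact hp (Finset.mem_filter.mpr ⟨Finset.mem_univ _, hwp⟩)
  -- supports of extreme points are independent
  have hindep : ∀ w ∈ E, Indep (supp w) := by
    intro w hw d hrow hcol hds
    obtain ⟨hwpos, hwrow, hwcol⟩ := hw.1
    by_contra hd
    have hTne : ∃ p, d p ≠ 0 := by
      by_contra hall
      push_neg at hall
      exact hd (funext hall)
    set T : Finset (X × Y) := Finset.univ.filter (fun p => d p ≠ 0) with hTdef
    have hTne' : T.Nonempty := by
      obtain ⟨p, hp⟩ := hTne
      exact ⟨p, Finset.mem_filter.mpr ⟨Finset.mem_univ _, hp⟩⟩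
    set img := T.image (fun p => w p / |d p|) with himgdef
    have himgne : img.Nonempty := hTne'.image _
    set ε := img.min' himgne with hεdef
    have hεpos : 0 < ε := by
      obtain ⟨p, hpT, hpe⟩ := Finset.mem_image.mp (img.min'_mem himgne)
      rw [hεdef, ← hpe]
      have hdp : d p ≠ 0 := (Finset.mem_filter.mp hpT).2
      have hwp : w p ≠ 0 := by
        intro h0
        exact hdp (hds p (by
          intro hmem
          exact (Finset.mem_filter.mp hmem).2 h0))
      exact div_pos (lt_of_le_of_ne (hwpos p) (Ne.symm hwp)) (abs_pos.mpr hdp)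
    have hbound : ∀ p, ε * |d p| ≤ w p := by
      intro p
      by_cases hdp : d p = 0
      · simp [hdp]
        exact hwpos p
      · have hpT : p ∈ T := Finset.mem_filter.mpr ⟨Finset.mem_univ _, hdp⟩
        have hle : ε ≤ w p / |d p| :=
          Finset.min'_le img _ (Finset.mem_image_of_mem _ hpT)
        exact (le_div_iff₀ (abs_pos.mpr hdp)).mp hle
    have hmem : ∀ t : ℝ, |t| ≤ ε → w + t • d ∈ Kset μ₁ μ₂ := by
      intro t ht
      refine ⟨?_, ?_, ?_⟩
      · intro p
        have h1 : |t * d p| ≤ ε * |d p| := by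
          rw [abs_mul]
          exact mul_le_mul_of_nonneg_right ht (abs_nonneg _)
        have h2 := neg_abs_le (t * d p)
        have h3 := hbound p
        simp only [Pi.add_apply, Pi.smul_apply, smul_eq_mul]
        linarith
      · intro x
        have hpt : ∀ y, (w + t • d) (x,y) = w (x,y) + t * d (x,y) := fun y => rfl
        rw [Finset.sum_congr rfl (fun y _ => hpt y), Finset.sum_add_distrib,
          ← Finset.mul_sum, hrow x, hwrow x]
        ring
      · intro y
        have hpt : ∀ x, (w + t • d) (x,y) = w (x,y) + t * d (x,y) := fun x => rfl
        rw [Finset.sum_congr rfl (fun x _ => hpt x), Finset.sum_add_distrib,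
          ← Finset.mul_sum, hcol y, hwcol y]
        ring
    have hw1 : w + ε • d ∈ Kset μ₁ μ₂ := hmem ε (by rw [abs_of_pos hεpos])
    have hw2 : w + (-ε) • d ∈ Kset μ₁ μ₂ := hmem (-ε) (by rw [abs_neg, abs_of_pos hεpos])
    have hseg : w ∈ openSegment ℝ (w + (-ε) • d) (w + ε • d) := by
      refine ⟨1/2, 1/2, by norm_num, by norm_num, by norm_num, ?_⟩
      funext p
      simp only [Pi.add_apply, Pi.smul_apply, smul_eq_mul]
      ring
    have hext := hw.2 hw2 hw1 hseg
    have heq : w + ε • d = w := hw.2 hw1 hw2 (by rw [openSegment_symm]; exact hseg)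
    have h0 : ε • d = 0 := by
      have := congrArg (· - w) heq
      simpa using this
    rcases smul_eq_zero.mp h0 with hε0 | hd0
    · exact absurd hε0 (ne_of_gt hεpos)
    · exact hd hd0
  -- injectivity of encode ∘ supp on E
  have hinj : Set.InjOn (fun w => encode (supp w)) E := by
    intro w1 h1 w2 h2 heq
    have hsupp_eq : supp w1 = supp w2 := by
      have e1 := decode_encode (supp w1) (hindep w1 h1)
      have e2 := decode_encode (supp w2) (hindep w2 h2)
      rw [← e1, ← e2]
      simp only at heq
      rw [heq]
    obtain ⟨_, hr1, hc1⟩ := h1.1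
    obtain ⟨_, hr2, hc2⟩ := h2.1
    have hd0 : w1 - w2 = 0 := by
      apply hindep w1 h1 (w1 - w2)
      · intro x
        have hpt : ∀ y, (w1 - w2) (x,y) = w1 (x,y) - w2 (x,y) := fun y => rfl
        rw [Finset.sum_congr rfl (fun y _ => hpt y), Finset.sum_sub_distrib, hr1 x, hr2 x]
        ring
      · intro y
        have hpt : ∀ x, (w1 - w2) (x,y) = w1 (x,y) - w2 (x,y) := fun x => rfl
        rw [Finset.sum_congr rfl (fun x _ => hpt x), Finset.sum_sub_distrib, hc1 y, hc2 y]
        ring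
      · intro p hp
        have hz1 : w1 p = 0 := hsupp_mem w1 p hp
        have hz2 : w2 p = 0 := hsupp_mem w2 p (hsupp_eq ▸ hp)
        show w1 p - w2 p = 0
        rw [hz1, hz2, sub_zero]
    exact sub_eq_zero.mp hd0
  calc E.ncard = ((fun w => encode (supp w)) '' E).ncard :=
        (Set.ncard_image_of_injOn hinj).symm
    _ ≤ (Set.univ : Set ((Y → Option X) × (X → Option Y))).ncard :=
        Set.ncard_le_ncard (Set.subset_univ _) Set.finite_univ
    _ = Fintype.card ((Y → Option X) × (X → Option Y)) := by
        rw [Set.ncard_univ, Nat.card_eq_fintype_card]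
    _ = (Fintype.card X + 1)^(Fintype.card Y) * (Fintype.card Y + 1)^(Fintype.card X) := by
        simp [Fintype.card_prod, Fintype.card_fun, Fintype.card_option]


theorem stmt_19 :
    (∀ ε : ℝ, 0 < ε → ∃ N : ℕ, ∀ m₁ n₁ : ℕ, N ≤ m₁ → N ≤ n₁ →
      ((m₁ ^ (n₁ - 1) * n₁ ^ (m₁ - 1) : ℕ) : ℝ) /
          ((m₁ * n₁).choose (m₁ + n₁ - 1) : ℝ) < ε) ∧
    (∀ ε : ℝ, 0 < ε → ∃ N : ℕ, ∀ m₁ n₁ : ℕ, N ≤ m₁ → N ≤ n₁ →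
      ∀ (X Y : Type) (_ : Fintype X) (_ : Fintype Y),
        Fintype.card X = m₁ → Fintype.card Y = n₁ →
        ∀ (μ₁ : X → ℝ) (μ₂ : Y → ℝ),
          (∀ x, 0 < μ₁ x) → (∀ y, 0 < μ₂ y) →
          (∑ x, μ₁ x = 1) → (∑ y, μ₂ y = 1) →
          ((Set.extremePoints ℝ (Kset μ₁ μ₂)).ncard : ℝ) /
              ((m₁ * n₁).choose (m₁ + n₁ - 1) : ℝ) < ε) := by
  constructor
  · intro ε hε
    obtain ⟨N, hN30, hNp⟩ := ratio_lt ε hε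
    refine ⟨N, fun m n hm hn => ?_⟩
    have hb := hNp m n hm hn
    have hden : (0:ℝ) < ((m*n).choose (m+n-1) : ℝ) := by
      have := (aux_sub m n (by omega) (by omega)).2
      exact_mod_cast Nat.choose_pos this
    have hnum : ((m ^ (n - 1) * n ^ (m - 1) : ℕ) : ℝ) ≤ (((m+1)^n * (n+1)^m : ℕ) : ℝ) := by
      have h1 : m ^ (n-1) ≤ (m+1)^n :=
        le_trans (Nat.pow_le_pow_left (Nat.le_succ m) _)
          (Nat.pow_le_pow_right (by omega) (by omega))
      have h2 : n ^ (m-1) ≤ (n+1)^m :=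
        le_trans (Nat.pow_le_pow_left (Nat.le_succ n) _)
          (Nat.pow_le_pow_right (by omega) (by omega))
      exact_mod_cast Nat.mul_le_mul h1 h2
    calc ((m ^ (n - 1) * n ^ (m - 1) : ℕ) : ℝ) / ((m * n).choose (m + n - 1) : ℝ)
        ≤ (((m+1)^n * (n+1)^m : ℕ) : ℝ) / ((m * n).choose (m + n - 1) : ℝ) := by
          gcongr
      _ < ε := hb
  · intro ε hε
    obtain ⟨N, hN30, hNp⟩ := ratio_lt ε hε
    refine ⟨N, fun m n hm hn => ?_⟩
    intro X Y iX iY hcX hcY μ₁ μ₂ _ _ _ _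
    have hb := hNp m n hm hn
    have hden : (0:ℝ) < ((m*n).choose (m+n-1) : ℝ) := by
      have := (aux_sub m n (by omega) (by omega)).2
      exact_mod_cast Nat.choose_pos this
    have hcard := @ncard_extreme_le X Y iX iY μ₁ μ₂
    rw [hcX, hcY] at hcard
    have hnum : (((Set.extremePoints ℝ (Kset μ₁ μ₂)).ncard : ℕ) : ℝ)
        ≤ (((m+1)^n * (n+1)^m : ℕ) : ℝ) := by
      exact_mod_cast hcard
    calc ((Set.extremePoints ℝ (Kset μ₁ μ₂)).ncard : ℝ) / ((m * n).choose (m + n - 1) : ℝ)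
        ≤ (((m+1)^n * (n+1)^m : ℕ) : ℝ) / ((m * n).choose (m + n - 1) : ℝ) := by
          gcongr
      _ < ε := hb
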